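/- Given an infinite path P = {Γ₁, Γ₂, …} in covtree, there exists a strictly increasing sequence m₁ < m₂ < … of natural numbers and labeled causets C̃_{m₁} ⊂ C̃_{m₂} ⊂ … such that |C̃_{m_k}| = m_k, each C̃_{m_k} is a stem in C̃_{m_{k+1}}, and C̃_{m_{k+1}} is a labeled certificate of Γ_{m_k}; the union of this nested sequence is a labeled certificate of the whole path P. -/

import Mathlib

/-- A finite labeled order: a partial order structure on `Fin n`. -/
abbrev FinOrd (n : ℕ) := PartialOrder (Fin n)

/-- Isomorphism of two orders on `Fin n`. -/
def OrdIso {n : ℕ} (p q : FinOrd n) : Prop :=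
  Nonempty (p.le ≃r q.le)

instance ordSetoid (n : ℕ) : Setoid (FinOrd n) where
  r := OrdIso
  iseqv := by
    refine ⟨fun p => ⟨RelIso.refl _⟩, ?_, ?_⟩
    · rintro p q ⟨e⟩; exact ⟨e.symm⟩
    · rintro p q r ⟨e⟩ ⟨f⟩; exact ⟨e.trans f⟩

/-- An `n`-order: an isomorphism class of partial orders of cardinality `n`. -/
def NOrder (n : ℕ) := Quotient (ordSetoid n)

/-- `B` (a partial order on `Fin n`) occurs as a stem (finite downward-closed
subcauset) in the partial order `p` on `α`. -/
def StemIn {n : ℕ} {α : Type*} (B : FinOrd n) (p : PartialOrder α) : Prop :=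
  ∃ f : Fin n → α, Function.Injective f ∧
    (∀ i j : Fin n, B.le i j ↔ p.le (f i) (f j)) ∧
    (∀ (i : Fin n) (y : α), p.lt y (f i) → ∃ j : Fin n, f j = y)

/-- The `n`-order `B` is a stem in the order `p`. -/
def QStemIn {n : ℕ} {α : Type*} (B : NOrder n) (p : PartialOrder α) : Prop :=
  ∃ b : FinOrd n, ⟦b⟧ = B ∧ StemIn b p

/-- The set of `k`-stems of `p`, as a set of `k`-orders. -/
def stems (k : ℕ) {α : Type*} (p : PartialOrder α) : Set (NOrder k) :=
  {B | QStemIn B p}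

/-- Stem relation between unlabeled finite orders: `S` is a stem in `T`. -/
def NStemIn {n m : ℕ} (S : NOrder n) (T : NOrder m) : Prop :=
  ∃ t : FinOrd m, ⟦t⟧ = T ∧ QStemIn S t

/-- An order is past-finite if every element has finitely many elements below it. -/
def PastFinite {α : Type*} (p : PartialOrder α) : Prop :=
  ∀ x : α, {y : α | p.lt y x}.Finite

/-- The operation sending a set of `n`-orders to the set of `(n-1)`-stems of its
elements. -/
def Ominus (n : ℕ) (Γ : Set (NOrder n)) : Set (NOrder (n - 1)) :=
  {B | ∃ A ∈ Γ, NStemIn B A}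

/-- The `j`-fold iterate of `Ominus`. -/
def OminusIter : (j : ℕ) → (n : ℕ) → Set (NOrder n) → Set (NOrder (n - j))
  | 0, _, Γ => Γ
  | j + 1, n, Γ => Ominus (n - j) (OminusIter j n Γ)

/-- `Γ` is a node of covtree at level `n`: it is nonempty and has a certificate,
i.e. a (finite or countably infinite) past-finite order whose set of `n`-stems
is exactly `Γ`. -/
def IsNode (n : ℕ) (Γ : Set (NOrder n)) : Prop :=
  Γ.Nonempty ∧ ∃ (α : Type) (p : PartialOrder α), Countable α ∧ PastFinite p ∧
    stems n p = Γ


/-- An infinite path in covtree, starting at the root: for each `n` a node of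
covtree at level `n` (a nonempty set of `n`-orders admitting a certificate),
each node being directly below the next via the `O₋` operation.  (Level `0`
carries the trivial node consisting of the empty order.) -/
structure CovPath where
  node : (n : ℕ) → Set (NOrder n)
  nonempty : ∀ n, (node n).Nonempty
  isNode : ∀ n, IsNode n (node n)
  link : ∀ n, Ominus (n + 1) (node (n + 1)) = node n


/-- A labeled causet of cardinality `n`: a partial order on `{0, …, n-1}` such
that `i ≺ j` implies `i < j`. -/
def LabCauset (n : ℕ) := {p : FinOrd n // ∀ i j : Fin n, p.lt i j → (i : ℕ) < (j : ℕ)}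

-- ==== auxiliary development ====
open Function
section Aux
variable {α β : Type*} {n m N : ℕ}

/-- Stem embedding predicate. -/
def IsStemEmb (b : FinOrd n) (p : PartialOrder α) (f : Fin n → α) : Prop :=
  Function.Injective f ∧ (∀ i j : Fin n, b.le i j ↔ p.le (f i) (f j)) ∧
    (∀ (i : Fin n) (y : α), p.lt y (f i) → ∃ j : Fin n, f j = y)

theorem stemIn_iff {b : FinOrd n} {p : PartialOrder α} :
    StemIn b p ↔ ∃ f, IsStemEmb b p f := Iff.rfl

theorem IsStemEmb.lt_iff {b : FinOrd n} {p : PartialOrder α} {f : Fin n → α}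
    (h : IsStemEmb b p f) (i j : Fin n) : b.lt i j ↔ p.lt (f i) (f j) := by
  rw [b.lt_iff_le_not_ge, p.lt_iff_le_not_ge, h.2.1, h.2.1]

theorem IsStemEmb.stemIn {b : FinOrd n} {p : PartialOrder α} {f : Fin n → α}
    (h : IsStemEmb b p f) : StemIn b p := ⟨f, h⟩

theorem StemIn.emb {b : FinOrd n} {p : PartialOrder α}
    (h : StemIn b p) : ∃ f, IsStemEmb b p f := h

theorem IsStemEmb.comp {b : FinOrd n} {t : FinOrd m} {p : PartialOrder α}
    {g : Fin n → Fin m} {h : Fin m → α}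
    (hg : IsStemEmb b t g) (hh : IsStemEmb t p h) : IsStemEmb b p (h ∘ g) := by
  refine ⟨hh.1.comp hg.1, fun i j => (hg.2.1 i j).trans (hh.2.1 _ _), ?_⟩
  intro i y hy
  obtain ⟨j, hj⟩ := hh.2.2 (g i) y hy
  subst hj
  obtain ⟨i', hi'⟩ := hg.2.2 i j (by rw [hh.lt_iff]; exact hy)
  exact ⟨i', show h (g i') = h j from congrArg h hi'⟩

/-- transport along an isomorphism of the small order -/
theorem IsStemEmb.transport {b b' : FinOrd n} {p : PartialOrder α} {f : Fin n → α}
    (e : b.le ≃r b'.le) (h : IsStemEmb b p f) : IsStemEmb b' p (f ∘ e.symm.toEquiv) := by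
  refine ⟨h.1.comp e.symm.toEquiv.injective, fun i j => ?_, fun i y hy => ?_⟩
  · exact (e.symm.map_rel_iff).symm.trans (h.2.1 _ _)
  · obtain ⟨j, hj⟩ := h.2.2 (e.symm.toEquiv i) y hy
    refine ⟨e j, ?_⟩
    show f (e.symm.toEquiv (e j)) = y
    rw [show e.symm.toEquiv (e j) = j from e.symm_apply_apply j, hj]

theorem qStemIn_mk {b : FinOrd n} {p : PartialOrder α} :
    QStemIn ⟦b⟧ p ↔ StemIn b p := by
  constructor
  · rintro ⟨c, hc, hst⟩
    obtain ⟨f, hf⟩ := hst.emb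
    obtain ⟨e⟩ : OrdIso c b := Quotient.exact hc
    exact (IsStemEmb.transport e hf).stemIn
  · intro h; exact ⟨b, rfl, h⟩

theorem qstem_trans {B : NOrder n} {t : FinOrd m} {p : PartialOrder α}
    (h1 : QStemIn B t) (h2 : StemIn t p) : QStemIn B p := by
  obtain ⟨b, hb, hst⟩ := h1
  obtain ⟨f, hf⟩ := hst.emb
  obtain ⟨h, hh⟩ := h2.emb
  exact ⟨b, hb, (hf.comp hh).stemIn⟩

theorem nstem_stems {B : NOrder n} {A : NOrder m} {p : PartialOrder α}
    (h : NStemIn B A) (hA : A ∈ stems m p) : B ∈ stems n p := by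
  obtain ⟨t, rfl, hBt⟩ := h
  obtain ⟨t', ht', hst⟩ := hA
  obtain ⟨f, hf⟩ := hst.emb
  obtain ⟨e⟩ : OrdIso t' t := Quotient.exact ht'
  exact qstem_trans hBt (IsStemEmb.transport e hf).stemIn

/-- factoring a stem embedding through another stem embedding with larger range -/
theorem factor_emb {b : FinOrd n} {t : FinOrd m} {p : PartialOrder α}
    {f : Fin n → α} {ℓ : Fin m → α} (hf : IsStemEmb b p f) (hℓ : IsStemEmb t p ℓ)
    (hsub : ∀ i, ∃ j, ℓ j = f i) : StemIn b t := by
  choose g hg using hsub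
  refine ⟨g, fun a a' haa => hf.1 (by rw [← hg a, ← hg a', haa]), fun i j => ?_, ?_⟩
  · rw [hf.2.1 i j, ← hg i, ← hg j, hℓ.2.1]
  · intro i y hy
    have hy' : p.lt (ℓ y) (ℓ (g i)) := by rw [← hℓ.lt_iff]; exact hy
    rw [hg i] at hy'
    obtain ⟨j, hj⟩ := hf.2.2 i (ℓ y) hy'
    exact ⟨j, hℓ.1 (by rw [hg, hj])⟩

end Aux

section Aux2
open Function
variable {α β : Type*} {n m N : ℕ}

/-- `D` is a downward closed finite subset. -/
def IsStemSet (p : PartialOrder α) (D : Finset α) : Prop :=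
  ∀ x ∈ D, ∀ y, p.lt y x → y ∈ D

theorem IsStemEmb.range_stemSet [DecidableEq α] {b : FinOrd n} {p : PartialOrder α}
    {f : Fin n → α} (h : IsStemEmb b p f) :
    IsStemSet p (Finset.image f Finset.univ) := by
  intro x hx y hy
  simp only [Finset.mem_image, Finset.mem_univ, true_and] at hx ⊢
  obtain ⟨i, rfl⟩ := hx
  exact h.2.2 i y hy

/-- restriction of an order to a finite subset, pulled back along an injection -/
def pullOrd (p : PartialOrder α) {k : ℕ} (ℓ : Fin k → α) (hinj : Injective ℓ) : FinOrd k where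
  le i j := p.le (ℓ i) (ℓ j)
  lt i j := p.lt (ℓ i) (ℓ j)
  lt_iff_le_not_ge i j := p.lt_iff_le_not_ge _ _
  le_refl i := p.le_refl _
  le_trans i j l h1 h2 := p.le_trans _ _ _ h1 h2
  le_antisymm i j h1 h2 := hinj (p.le_antisymm _ _ h1 h2)

theorem pullOrd_le {p : PartialOrder α} {k : ℕ} {ℓ : Fin k → α} {hinj : Injective ℓ}
    (i j : Fin k) : (pullOrd p ℓ hinj).le i j ↔ p.le (ℓ i) (ℓ j) := Iff.rfl

theorem pullOrd_lt {p : PartialOrder α} {k : ℕ} {ℓ : Fin k → α} {hinj : Injective ℓ}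
    (i j : Fin k) : (pullOrd p ℓ hinj).lt i j ↔ p.lt (ℓ i) (ℓ j) := by
  exact Iff.rfl

theorem pullOrd_emb {p : PartialOrder α} {k : ℕ} {ℓ : Fin k → α} {hinj : Injective ℓ}
    {D : Finset α} (hD : IsStemSet p D) (hrange : ∀ x, x ∈ D ↔ ∃ i, ℓ i = x) :
    IsStemEmb (pullOrd p ℓ hinj) p ℓ := by
  refine ⟨hinj, fun i j => Iff.rfl, fun i y hy => ?_⟩
  exact (hrange y).mp (hD (ℓ i) ((hrange (ℓ i)).mpr ⟨i, rfl⟩) y hy)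

/-- extension of a finite stem set by one element -/
theorem stemSet_extend [DecidableEq α] {p : PartialOrder α} (hpf : PastFinite p)
    {D : Finset α} (hD : IsStemSet p D) {y : α} (hy : y ∉ D) :
    ∃ x, x ∉ D ∧ IsStemSet p (insert x D) := by
  classical
  letI := p
  set W : Finset α := insert y ((hpf y).toFinset.filter (fun z => z ∉ D)) with hW
  obtain ⟨x, hxW, hxmin⟩ := W.exists_minimal ⟨y, Finset.mem_insert_self _ _⟩
  have hxle : p.le x y := by
    rcases Finset.mem_insert.mp hxW with h | h
    · exact h ▸ p.le_refl x
    · have := (Finset.mem_filter.mp h).1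
      rw [Set.Finite.mem_toFinset] at this
      exact this.le
  have hxD : x ∉ D := by
    rcases Finset.mem_insert.mp hxW with h | h
    · exact h ▸ hy
    · exact (Finset.mem_filter.mp h).2
  refine ⟨x, hxD, ?_⟩
  intro w hw z hz
  rcases Finset.mem_insert.mp hw with h | h
  · by_contra hzD
    rw [h] at hz
    have hzD' : z ∉ D := fun hc => hzD (Finset.mem_insert_of_mem hc)
    have hzy : p.lt z y := by
      refine (p.lt_iff_le_not_ge z y).mpr ⟨p.le_trans _ _ _ ((p.lt_iff_le_not_ge z x).mp hz).1 hxle, ?_⟩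
      intro hyz
      have : p.le y x := p.le_trans _ _ _ hyz ((p.lt_iff_le_not_ge z x).mp hz).1
      have hxy : x = y := p.le_antisymm _ _ hxle this
      subst hxy
      exact ((p.lt_iff_le_not_ge z x).mp hz).2 hyz
    have hzW : z ∈ W := by
      rw [hW]
      refine Finset.mem_insert_of_mem (Finset.mem_filter.mpr ⟨?_, hzD'⟩)
      rw [Set.Finite.mem_toFinset]; exact hzy
    exact ((p.lt_iff_le_not_ge z x).mp hz).2 (hxmin hzW ((p.lt_iff_le_not_ge z x).mp hz).1)
  · exact Finset.mem_insert_of_mem (hD w h z hz)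

end Aux2

section Aux3
open Function
variable {α β : Type*} {n m N : ℕ}

instance finOrdFinite : Finite (FinOrd n) := by
  refine Finite.of_injective (fun p => p.le) ?_
  intro p q h
  refine PartialOrder.ext ?_
  intro x y
  show p.le x y ↔ q.le x y
  rw [show p.le = q.le from h]

instance nOrderFinite : Finite (NOrder n) := Quotient.finite _

theorem exists_not_mem_of_card_lt [DecidableEq α] {g : Fin N → α} (hg : Injective g)
    {D : Finset α} (hD : D.card < N) : ∃ i, g i ∉ D := by
  by_contra h
  push_neg at h
  have hsub : (Finset.image g Finset.univ) ⊆ D := by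
    intro x hx
    simp only [Finset.mem_image, Finset.mem_univ, true_and] at hx
    obtain ⟨i, rfl⟩ := hx; exact h i
  have := Finset.card_le_card hsub
  rw [Finset.card_image_of_injective _ hg, Finset.card_univ, Fintype.card_fin] at this
  omega

theorem stems_down (P : CovPath) {α : Type*} (p : PartialOrder α) (hpf : PastFinite p)
    {N : ℕ} (hN : stems N p = P.node N) : ∀ n, n ≤ N → stems n p = P.node n := by
  classical
  suffices h : ∀ d, stems (N - d) p = P.node (N - d) by
    intro n hn
    have := h (N - n)
    rwa [Nat.sub_sub_self hn] at this
  intro d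
  induction d with
  | zero => simpa using hN
  | succ d ih =>
    rcases le_or_gt N d with hNd | hdN
    · have heq : N - (d+1) = N - d := by omega
      rw [heq]; exact ih
    · set n := N - (d+1) with hn
      have hsucc : N - d = n + 1 := by omega
      rw [hsucc] at ih
      have hlink := P.link n
      -- some injective (n+1)-tuple in α
      obtain ⟨A, hA⟩ := P.nonempty (n+1)
      have hA' : A ∈ stems (n+1) p := ih.symm ▸ hA
      obtain ⟨a, -, hsta⟩ := hA'
      obtain ⟨g, hg⟩ := hsta.emb
      apply Set.eq_of_subset_of_subset
      · intro B hB
        obtain ⟨b, hb, hst⟩ := hB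
        obtain ⟨f, hf⟩ := hst.emb
        set D : Finset α := Finset.image f Finset.univ with hDdef
        have hcard : D.card = n := by
          rw [hDdef, Finset.card_image_of_injective _ hf.1, Finset.card_univ, Fintype.card_fin]
        obtain ⟨i0, hi0⟩ := exists_not_mem_of_card_lt hg.1 (by omega : D.card < n + 1)
        obtain ⟨x, hx, hD'⟩ := stemSet_extend hpf hf.range_stemSet hi0
        set D' : Finset α := insert x D with hD'def
        have hcard' : D'.card = n + 1 := by
          rw [hD'def, Finset.card_insert_of_notMem hx, hcard]
        have e : Fin (n+1) ≃ {z // z ∈ D'} :=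
          (Fintype.equivFinOfCardEq (by rw [Fintype.card_coe, hcard'])).symm
        set ℓ : Fin (n+1) → α := fun i => (e i : α) with hldef
        have hlinj : Injective ℓ := fun i j hij => e.injective (Subtype.ext hij)
        have hrange : ∀ z, z ∈ D' ↔ ∃ i, ℓ i = z := by
          intro z
          constructor
          · intro hz; exact ⟨e.symm ⟨z, hz⟩, by simp [hldef]⟩
          · rintro ⟨i, rfl⟩; exact (e i).2
        have hemb' := pullOrd_emb (hinj := hlinj) hD' hrange
        have ht'mem : (⟦pullOrd p ℓ hlinj⟧ : NOrder (n+1)) ∈ P.node (n+1) := by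
          rw [← ih]
          exact qStemIn_mk.mpr hemb'.stemIn
        have hbt' : StemIn b (pullOrd p ℓ hlinj) := by
          refine factor_emb hf hemb' ?_
          intro i
          refine (hrange (f i)).mp ?_
          exact Finset.mem_insert_of_mem (by simp [hDdef])
        rw [← hlink]
        exact ⟨⟦pullOrd p ℓ hlinj⟧, ht'mem, pullOrd p ℓ hlinj, rfl, hb ▸ qStemIn_mk.mpr hbt'⟩
      · intro B hB
        rw [← hlink] at hB
        obtain ⟨A', hA'', hBA⟩ := hB
        exact nstem_stems hBA (ih.symm ▸ hA'')

theorem cert_down (P : CovPath) (N : ℕ) :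
    ∃ (β : Type) (p : PartialOrder β), PastFinite p ∧ ∀ n, n ≤ N → stems n p = P.node n := by
  obtain ⟨-, β, p, -, hpf, hst⟩ := P.isNode N
  exact ⟨β, p, hpf, stems_down P p hpf hst⟩

theorem stems_of_node_mem (P : CovPath) {N n : ℕ} (hn : n ≤ N) {t : FinOrd N}
    (ht : (⟦t⟧ : NOrder N) ∈ P.node N) : stems n t ⊆ P.node n := by
  obtain ⟨β, p, hpf, hst⟩ := cert_down P N
  have htp : StemIn t p := by
    refine qStemIn_mk.mp ?_
    have : (⟦t⟧ : NOrder N) ∈ stems N p := (hst N le_rfl).symm ▸ ht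
    exact this
  intro S hS
  rw [← hst n hn]
  exact qstem_trans hS htp

/-- collect embeddings of a finite set of stems into a common stem set -/
theorem finset_embs {p : PartialOrder β} (S : Finset (NOrder n)) :
    (∀ A ∈ S, A ∈ stems n p) →
    ∃ D : Finset β, IsStemSet p D ∧ D.card ≤ n * S.card ∧
      ∀ A ∈ S, ∃ (b : FinOrd n) (f : Fin n → β), ⟦b⟧ = A ∧ IsStemEmb b p f ∧ ∀ i, f i ∈ D := by
  classical
  induction S using Finset.induction_on with
  | empty =>
    intro _
    exact ⟨∅, fun x hx => absurd hx (Finset.notMem_empty x), by simp, by simp⟩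
  | @insert a s ha ih =>
    intro hsub
    obtain ⟨D, hD, hcard, hall⟩ := ih (fun A hA => hsub A (Finset.mem_insert_of_mem hA))
    have haS := hsub a (Finset.mem_insert_self _ _)
    obtain ⟨b, hb, hst⟩ := haS
    obtain ⟨f, hf⟩ := hst.emb
    refine ⟨D ∪ Finset.image f Finset.univ, ?_, ?_, ?_⟩
    · intro w hw z hz
      rcases Finset.mem_union.mp hw with h | h
      · exact Finset.mem_union_left _ (hD w h z hz)
      · exact Finset.mem_union_right _ (hf.range_stemSet w h z hz)
    · have h1 : (Finset.image f Finset.univ).card ≤ n := by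
        calc (Finset.image f Finset.univ).card ≤ Finset.univ.card := Finset.card_image_le
        _ = n := by rw [Finset.card_univ, Fintype.card_fin]
      have h2 : (insert a s).card = s.card + 1 := Finset.card_insert_of_notMem ha
      calc (D ∪ Finset.image f Finset.univ).card ≤ D.card + (Finset.image f Finset.univ).card :=
            Finset.card_union_le _ _
        _ ≤ n * s.card + n := by omega
        _ = n * (insert a s).card := by rw [h2]; ring
    · intro A hA
      rcases Finset.mem_insert.mp hA with h | h
      · exact ⟨b, f, h ▸ hb, hf, fun i => Finset.mem_union_right _ (by simp)⟩
      · obtain ⟨b', f', hb', hf', hmem⟩ := hall A h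
        exact ⟨b', f', hb', hf', fun i => Finset.mem_union_left _ (hmem i)⟩

end Aux3

section Aux4
open Function
variable {α β : Type*} {n m N : ℕ}

/-- the induced order on a finite subset -/
def subOrd (p : PartialOrder α) (R : Finset α) : PartialOrder {x // x ∈ R} where
  le a b := p.le a b
  lt a b := p.lt a b
  lt_iff_le_not_ge a b := p.lt_iff_le_not_ge _ _
  le_refl a := p.le_refl _
  le_trans a b c h1 h2 := p.le_trans _ _ _ h1 h2
  le_antisymm a b h1 h2 := Subtype.ext (p.le_antisymm _ _ h1 h2)

/-- every finite partial order admits a linear-extension labeling -/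
theorem exists_labeling {β : Type*} [Fintype β] (w : PartialOrder β) {k : ℕ}
    (hk : Fintype.card β = k) :
    ∃ g : Fin k ≃ β, ∀ a b : Fin k, w.lt (g a) (g b) → a < b := by
  classical
  let fL : LinearOrder (LinearExtension β) := by letI := w; exact inferInstance
  letI hF : Fintype (LinearExtension β) := ‹Fintype β›
  have hc : @Fintype.card (LinearExtension β) hF = k := hk
  let e : Fin k ≃o LinearExtension β := @monoEquivOfFin (LinearExtension β) hF fL k hc
  let π : β →o LinearExtension β := @toLinearExtension β w
  refine ⟨⟨fun a => (e a : β), fun x => e.symm (π x), ?_, ?_⟩, ?_⟩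
  · intro a; exact e.symm_apply_apply a
  · intro x; exact e.apply_symm_apply (π x)
  · intro a b hab
    have h1 : w.le (e a : β) (e b : β) := ((w.lt_iff_le_not_ge _ _).mp hab).1
    have hne : (e a : β) ≠ (e b : β) := by
      intro hcontra
      have h2 := (w.lt_iff_le_not_ge (e a : β) (e b : β)).mp hab
      rw [hcontra] at h2
      exact h2.2 h2.1
    have hle : fL.le (e a) (e b) := π.monotone h1
    have hlt : fL.lt (e a) (e b) := (fL.lt_iff_le_not_ge _ _).mpr
      ⟨hle, fun hc' => hne (fL.le_antisymm _ _ hle hc')⟩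
    have hnotba : ¬ fL.le (e b) (e a) := ((fL.lt_iff_le_not_ge _ _).mp hlt).2
    have hba : ¬ b ≤ a := fun hba => hnotba (e.map_rel_iff.mpr hba)
    exact not_le.mp hba

theorem step_lemma (P : CovPath) {s : ℕ} (t : FinOrd s)
    (hlab : ∀ i j : Fin s, t.lt i j → (i : ℕ) < (j : ℕ))
    (ht : (⟦t⟧ : NOrder s) ∈ P.node s) :
    ∃ (s' : ℕ) (hs : s < s') (t' : FinOrd s'),
      (∀ i j : Fin s, t.le i j ↔ t'.le (Fin.castLE hs.le i) (Fin.castLE hs.le j)) ∧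
      (∀ i j : Fin s', t'.lt i j → (i : ℕ) < (j : ℕ)) ∧
      (⟦t'⟧ : NOrder s') ∈ P.node s' ∧
      (∀ n, n ≤ s → ∀ A ∈ P.node n, A ∈ stems n t') := by
  classical
  set c : ℕ → ℕ := fun n => ((P.node n).toFinite.toFinset).card with hcdef
  set N : ℕ := s + 1 + ∑ n ∈ Finset.range (s + 1), n * c n with hNdef
  obtain ⟨β, p, hpf, hst⟩ := cert_down P N
  have hsN : s ≤ N := by omega
  have htp : StemIn t p := by
    refine qStemIn_mk.mp ?_
    have hmem : (⟦t⟧ : NOrder s) ∈ stems s p := by rw [hst s hsN]; exact ht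
    exact hmem
  obtain ⟨f, hf⟩ := htp.emb
  -- collect embeddings of all elements of nodes of level ≤ s into a common stem set
  have hcollect : ∀ k, k ≤ s + 1 → ∃ D : Finset β, IsStemSet p D ∧
      D.card ≤ ∑ n ∈ Finset.range k, n * c n ∧
      ∀ n, n < k → ∀ A ∈ P.node n, ∃ (b : FinOrd n) (gA : Fin n → β),
        ⟦b⟧ = A ∧ IsStemEmb b p gA ∧ ∀ i, gA i ∈ D := by
    intro k
    induction k with
    | zero =>
      intro _
      exact ⟨∅, fun z hz => absurd hz (Finset.notMem_empty z), by simp, by omega⟩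
    | succ k ih =>
      intro hk
      obtain ⟨D, hD, hcard, hall⟩ := ih (by omega)
      have hmem : ∀ A ∈ (P.node k).toFinite.toFinset, A ∈ stems k p := by
        intro A hA
        rw [Set.Finite.mem_toFinset] at hA
        rw [hst k (by omega)]
        exact hA
      obtain ⟨Dk, hDk, hcardk, hallk⟩ := finset_embs ((P.node k).toFinite.toFinset) hmem
      refine ⟨D ∪ Dk, ?_, ?_, ?_⟩
      · intro w hw z hz
        rcases Finset.mem_union.mp hw with h | h
        · exact Finset.mem_union_left _ (hD w h z hz)
        · exact Finset.mem_union_right _ (hDk w h z hz)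
      · calc (D ∪ Dk).card ≤ D.card + Dk.card := Finset.card_union_le _ _
          _ ≤ (∑ n ∈ Finset.range k, n * c n) + k * c k := by
              have : Dk.card ≤ k * c k := hcardk
              omega
          _ = ∑ n ∈ Finset.range (k+1), n * c n := (Finset.sum_range_succ _ _).symm
      · intro n hn A hA
        rcases Nat.lt_succ_iff_lt_or_eq.mp hn with h | h
        · obtain ⟨b, gA, hb, hgA, hmemD⟩ := hall n h A hA
          exact ⟨b, gA, hb, hgA, fun i => Finset.mem_union_left _ (hmemD i)⟩
        · subst h
          obtain ⟨b, gA, hb, hgA, hmemD⟩ := hallk A (by rw [Set.Finite.mem_toFinset]; exact hA)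
          exact ⟨b, gA, hb, hgA, fun i => Finset.mem_union_right _ (hmemD i)⟩
  obtain ⟨D0, hD0, hcard0, hall0⟩ := hcollect (s+1) le_rfl
  set F : Finset β := Finset.image f Finset.univ with hFdef
  have hFcard : F.card = s := by
    rw [hFdef, Finset.card_image_of_injective _ hf.1, Finset.card_univ, Fintype.card_fin]
  set D1 : Finset β := D0 ∪ F with hD1def
  have hD1 : IsStemSet p D1 := by
    intro w hw z hz
    rcases Finset.mem_union.mp hw with h | h
    · exact Finset.mem_union_left _ (hD0 w h z hz)
    · exact Finset.mem_union_right _ (hf.range_stemSet w h z hz)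
  have hD1card : D1.card < N := by
    have h1 : D1.card ≤ D0.card + F.card := Finset.card_union_le _ _
    omega
  -- an element outside D1
  obtain ⟨A0, hA0⟩ := P.nonempty N
  have hA0' : A0 ∈ stems N p := (hst N le_rfl).symm ▸ hA0
  obtain ⟨a0, -, hsta0⟩ := hA0'
  obtain ⟨g0, hg0⟩ := hsta0.emb
  obtain ⟨i0, hi0⟩ := exists_not_mem_of_card_lt hg0.1 hD1card
  obtain ⟨x, hx, hDx⟩ := stemSet_extend hpf hD1 hi0
  set Dx : Finset β := insert x D1 with hDxdef
  set s' : ℕ := Dx.card with hs'def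
  have hs'eq : s' = D1.card + 1 := by
    rw [hs'def, hDxdef, Finset.card_insert_of_notMem hx]
  have hFD1 : F ⊆ D1 := Finset.subset_union_right
  have hFDx : F ⊆ Dx := hFD1.trans (Finset.subset_insert _ _)
  have hss' : s < s' := by
    have := Finset.card_le_card hFD1
    omega
  have hs'N : s' ≤ N := by omega
  -- labeling of the complement
  set R : Finset β := Dx \ F with hRdef
  set r : ℕ := s' - s with hrdef
  have hRcard : R.card = r := by
    rw [hRdef, Finset.card_sdiff_of_subset hFDx, hFcard, ← hs'def, hrdef]
  have hsr : s + r = s' := by omega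
  obtain ⟨g, hgmon⟩ := exists_labeling (subOrd p R) (k := r)
    (by rw [Fintype.card_coe]; exact hRcard)
  -- the labeling map
  set ℓ : Fin s' → β := fun i =>
    if h : (i : ℕ) < s then f ⟨i, h⟩
    else (g ⟨(i : ℕ) - s, by omega⟩ : β) with hℓdef
  have hℓlow : ∀ (i : Fin s') (h : (i : ℕ) < s), ℓ i = f ⟨i, h⟩ := by
    intro i h; rw [hℓdef]; exact dif_pos h
  have hℓhigh : ∀ (i : Fin s') (h : ¬ (i : ℕ) < s),
      ℓ i = (g ⟨(i : ℕ) - s, by omega⟩ : β) := by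
    intro i h; rw [hℓdef]; exact dif_neg h
  have hgR : ∀ a : Fin r, (g a : β) ∈ R := fun a => (g a).2
  have hRF : ∀ z ∈ R, z ∉ F := fun z hz => (Finset.mem_sdiff.mp hz).2
  have hRDx : R ⊆ Dx := Finset.sdiff_subset
  have hℓmem : ∀ i, ℓ i ∈ Dx := by
    intro i
    by_cases h : (i : ℕ) < s
    · rw [hℓlow i h]; exact hFDx (by rw [hFdef]; simp)
    · rw [hℓhigh i h]; exact hRDx (hgR _)
  have hℓinj : Injective ℓ := by
    intro i j hij
    by_cases hi : (i : ℕ) < s <;> by_cases hj : (j : ℕ) < s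
    · rw [hℓlow i hi, hℓlow j hj] at hij
      exact Fin.ext (congrArg (Fin.val : Fin s → ℕ) (hf.1 hij))
    · rw [hℓlow i hi, hℓhigh j hj] at hij
      exact absurd (hij ▸ (by rw [hFdef]; simp : f ⟨i, hi⟩ ∈ F)) (hRF _ (hgR _))
    · rw [hℓhigh i hi, hℓlow j hj] at hij
      exact absurd (hij ▸ hRF _ (hgR _)) (by intro hcon; exact hcon (by rw [hFdef]; simp))
    · rw [hℓhigh i hi, hℓhigh j hj] at hij
      have h1 := g.injective (Subtype.ext hij)
      have h2 := congrArg Fin.val h1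
      simp only at h2
      exact Fin.ext (by omega)
  have hℓsurj : ∀ z ∈ Dx, ∃ i, ℓ i = z := by
    intro z hz
    by_cases hzF : z ∈ F
    · rw [hFdef] at hzF
      simp only [Finset.mem_image, Finset.mem_univ, true_and] at hzF
      obtain ⟨i1, rfl⟩ := hzF
      refine ⟨⟨(i1 : ℕ), by omega⟩, ?_⟩
      rw [hℓlow _ (by simpa using i1.isLt)]
    · have hzR : z ∈ R := Finset.mem_sdiff.mpr ⟨hz, hzF⟩
      set a : Fin r := g.symm ⟨z, hzR⟩ with hadef
      refine ⟨⟨s + (a : ℕ), by omega⟩, ?_⟩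
      rw [hℓhigh _ (by show ¬ s + (a : ℕ) < s; omega)]
      have : (⟨s + (a : ℕ) - s, by omega⟩ : Fin r) = a := Fin.ext (by show s + (a : ℕ) - s = (a : ℕ); omega)
      rw [this, hadef]
      simp
  set t' : FinOrd s' := pullOrd p ℓ hℓinj with ht'def
  have hrange : ∀ z, z ∈ Dx ↔ ∃ i, ℓ i = z := by
    intro z
    exact ⟨hℓsurj z, by rintro ⟨i, rfl⟩; exact hℓmem i⟩
  have hembℓ : IsStemEmb t' p ℓ := pullOrd_emb hDx hrange
  refine ⟨s', hss', t', ?_, ?_, ?_, ?_⟩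
  · intro i j
    have h1 : ℓ (Fin.castLE hss'.le i) = f i := by
      rw [hℓlow _ (by simpa using i.isLt)]
      exact congrArg f (Fin.ext rfl)
    have h2 : ℓ (Fin.castLE hss'.le j) = f j := by
      rw [hℓlow _ (by simpa using j.isLt)]
      exact congrArg f (Fin.ext rfl)
    rw [hf.2.1 i j]
    show p.le (f i) (f j) ↔ p.le (ℓ _) (ℓ _)
    rw [h1, h2]
  · intro i j hij
    have hij' : p.lt (ℓ i) (ℓ j) := (pullOrd_lt i j).mp hij
    by_cases hi : (i : ℕ) < s <;> by_cases hj : (j : ℕ) < s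
    · rw [hℓlow i hi, hℓlow j hj] at hij'
      have h3 := (hf.lt_iff _ _).mpr hij'
      exact hlab _ _ h3
    · exact Nat.lt_of_lt_of_le hi (Nat.le_of_not_lt hj)
    · exfalso
      rw [hℓhigh i hi, hℓlow j hj] at hij'
      have hmemF : f ⟨j, hj⟩ ∈ F := by rw [hFdef]; simp
      have := hf.range_stemSet (f ⟨j, hj⟩) hmemF _ hij'
      exact hRF _ (hgR _) this
    · rw [hℓhigh i hi, hℓhigh j hj] at hij'
      have hlt : (subOrd p R).lt (g ⟨(i : ℕ) - s, by omega⟩) (g ⟨(j : ℕ) - s, by omega⟩) := hij'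
      have hab := hgmon _ _ hlt
      have h2 : (i : ℕ) - s < (j : ℕ) - s := hab
      clear hij hij'
      omega
  · rw [← hst s' hs'N]
    exact qStemIn_mk.mpr hembℓ.stemIn
  · intro n hn A hA
    obtain ⟨b, gA, hb, hgA, hmemD⟩ := hall0 n (by omega) A hA
    have hbt' : StemIn b t' := by
      refine factor_emb hgA hembℓ ?_
      intro i
      exact hℓsurj _ ((Finset.subset_insert _ _) (Finset.mem_union_left _ (hmemD i)))
    exact hb ▸ qStemIn_mk.mpr hbt'

end Aux4

section Main
open Function

structure ChainDat (P : CovPath) where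
  s : ℕ
  t : FinOrd s
  lab : ∀ i j : Fin s, t.lt i j → (i : ℕ) < (j : ℕ)
  mem : (⟦t⟧ : NOrder s) ∈ P.node s

noncomputable def nextDat (P : CovPath) (d : ChainDat P) :
    {d' : ChainDat P // ∃ h : d.s < d'.s,
      (∀ i j : Fin d.s, d.t.le i j ↔ d'.t.le (Fin.castLE h.le i) (Fin.castLE h.le j)) ∧
      ∀ n, n ≤ d.s → ∀ A ∈ P.node n, A ∈ stems n d'.t} := Classical.choice <| by
  obtain ⟨s', hs, t', h1, h2, h3, h4⟩ := step_lemma P d.t d.lab d.mem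
  exact ⟨⟨⟨s', t', h2, h3⟩, hs, h1, h4⟩⟩

def zeroOrd : FinOrd 0 := (inferInstance : PartialOrder (Fin 0))

noncomputable def baseDat (P : CovPath) : ChainDat P where
  s := 0
  t := zeroOrd
  lab := fun i => i.elim0
  mem := by
    obtain ⟨A, hA⟩ := P.nonempty 0
    obtain ⟨b, hb⟩ := Quotient.exists_rep A
    have h : (⟦zeroOrd⟧ : NOrder 0) = A :=
      (Quotient.sound ⟨RelIso.mk (Equiv.refl _) (fun {a b} => a.elim0)⟩ :
        (⟦zeroOrd⟧ : NOrder 0) = ⟦b⟧).trans hb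
    exact h.symm ▸ hA

noncomputable def chain (P : CovPath) : ℕ → ChainDat P
  | 0 => baseDat P
  | k+1 => (nextDat P (chain P k)).1

noncomputable def sfun (P : CovPath) (k : ℕ) : ℕ := (chain P k).s

noncomputable def tfun (P : CovPath) (k : ℕ) : FinOrd (sfun P k) := (chain P k).t

theorem chain_succ_lt (P : CovPath) (k : ℕ) : sfun P k < sfun P (k+1) :=
  (nextDat P (chain P k)).2.choose

theorem chain_succ_restr (P : CovPath) (k : ℕ) :
    ∀ i j : Fin (sfun P k), (tfun P k).le i j ↔
      (tfun P (k+1)).le (Fin.castLE (chain_succ_lt P k).le i)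
        (Fin.castLE (chain_succ_lt P k).le j) :=
  (nextDat P (chain P k)).2.choose_spec.1

theorem chain_succ_cert (P : CovPath) (k : ℕ) :
    ∀ n, n ≤ sfun P k → ∀ A ∈ P.node n, A ∈ stems n (tfun P (k+1)) :=
  (nextDat P (chain P k)).2.choose_spec.2

theorem sfun_mono (P : CovPath) : StrictMono (sfun P) :=
  strictMono_nat_of_lt_succ (chain_succ_lt P)

theorem sfun_ge (P : CovPath) (k : ℕ) : k ≤ sfun P k := (sfun_mono P).le_apply

theorem chain_le_iff (P : CovPath) {k k' : ℕ} (h : k ≤ k') {i j : ℕ}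
    (hi : i < sfun P k) (hj : j < sfun P k) (hi' : i < sfun P k') (hj' : j < sfun P k') :
    ((tfun P k).le ⟨i, hi⟩ ⟨j, hj⟩ ↔ (tfun P k').le ⟨i, hi'⟩ ⟨j, hj'⟩) := by
  induction k', h using Nat.le_induction with
  | base => exact Iff.rfl
  | succ k' hk ih =>
    have hle : sfun P k ≤ sfun P k' := (sfun_mono P).monotone hk
    have hi'' : i < sfun P k' := lt_of_lt_of_le hi hle
    have hj'' : j < sfun P k' := lt_of_lt_of_le hj hle
    refine (ih hi'' hj'').trans ?_
    have h1 := chain_succ_restr P k' ⟨i, hi''⟩ ⟨j, hj''⟩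
    have h2 : Fin.castLE (chain_succ_lt P k').le (⟨i, hi''⟩ : Fin (sfun P k')) = ⟨i, hi'⟩ :=
      Fin.ext rfl
    have h3 : Fin.castLE (chain_succ_lt P k').le (⟨j, hj''⟩ : Fin (sfun P k')) = ⟨j, hj'⟩ :=
      Fin.ext rfl
    rw [h2, h3] at h1
    exact h1

/-- the limit order on ℕ -/
noncomputable def qOrd (P : CovPath) : PartialOrder ℕ where
  le i j := ∃ k, ∃ hi : i < sfun P k, ∃ hj : j < sfun P k, (tfun P k).le ⟨i, hi⟩ ⟨j, hj⟩
  lt i j := (∃ k, ∃ hi : i < sfun P k, ∃ hj : j < sfun P k, (tfun P k).le ⟨i, hi⟩ ⟨j, hj⟩) ∧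
    ¬ (∃ k, ∃ hi : j < sfun P k, ∃ hj : i < sfun P k, (tfun P k).le ⟨j, hi⟩ ⟨i, hj⟩)
  lt_iff_le_not_ge i j := Iff.rfl
  le_refl i := by
    refine ⟨i+1, ?_, ?_, (tfun P (i+1)).le_refl _⟩ <;>
      exact lt_of_lt_of_le (Nat.lt_succ_self i) (sfun_ge P (i+1))
  le_trans i j l h1 h2 := by
    obtain ⟨k1, hi1, hj1, ht1⟩ := h1
    obtain ⟨k2, hj2, hl2, ht2⟩ := h2
    set k := max k1 k2 with hk
    have hle1 : sfun P k1 ≤ sfun P k := (sfun_mono P).monotone (le_max_left _ _)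
    have hle2 : sfun P k2 ≤ sfun P k := (sfun_mono P).monotone (le_max_right _ _)
    have hi : i < sfun P k := lt_of_lt_of_le hi1 hle1
    have hj : j < sfun P k := lt_of_lt_of_le hj1 hle1
    have hl : l < sfun P k := lt_of_lt_of_le hl2 hle2
    have e1 : (tfun P k).le ⟨i, hi⟩ ⟨j, hj⟩ :=
      (chain_le_iff P (le_max_left k1 k2) hi1 hj1 hi hj).mp ht1
    have e2 : (tfun P k).le ⟨j, hj⟩ ⟨l, hl⟩ :=
      (chain_le_iff P (le_max_right k1 k2) hj2 hl2 hj hl).mp ht2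
    exact ⟨k, hi, hl, (tfun P k).le_trans _ _ _ e1 e2⟩
  le_antisymm i j h1 h2 := by
    obtain ⟨k1, hi1, hj1, ht1⟩ := h1
    obtain ⟨k2, hj2, hi2, ht2⟩ := h2
    set k := max k1 k2 with hk
    have hle1 : sfun P k1 ≤ sfun P k := (sfun_mono P).monotone (le_max_left _ _)
    have hle2 : sfun P k2 ≤ sfun P k := (sfun_mono P).monotone (le_max_right _ _)
    have hi : i < sfun P k := lt_of_lt_of_le hi1 hle1
    have hj : j < sfun P k := lt_of_lt_of_le hj1 hle1
    have e1 : (tfun P k).le ⟨i, hi⟩ ⟨j, hj⟩ :=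
      (chain_le_iff P (le_max_left k1 k2) hi1 hj1 hi hj).mp ht1
    have e2 : (tfun P k).le ⟨j, hj⟩ ⟨i, hi⟩ :=
      (chain_le_iff P (le_max_right k1 k2) hj2 hi2 hj hi).mp ht2
    have := (tfun P k).le_antisymm _ _ e1 e2
    exact congrArg Fin.val this

theorem qOrd_le_iff (P : CovPath) {k : ℕ} {i j : ℕ} (hi : i < sfun P k) (hj : j < sfun P k) :
    (qOrd P).le i j ↔ (tfun P k).le ⟨i, hi⟩ ⟨j, hj⟩ := by
  constructor
  · rintro ⟨k', hi', hj', ht⟩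
    rcases le_total k' k with h | h
    · exact (chain_le_iff P h hi' hj' hi hj).mp ht
    · exact (chain_le_iff P h hi hj hi' hj').mpr ht
  · intro h; exact ⟨k, hi, hj, h⟩

theorem qOrd_lab (P : CovPath) : ∀ i j : ℕ, (qOrd P).lt i j → i < j := by
  intro i j hij
  obtain ⟨⟨k, hi, hj, ht⟩, hns⟩ := hij
  have hlt : (tfun P k).lt ⟨i, hi⟩ ⟨j, hj⟩ := by
    rw [(tfun P k).lt_iff_le_not_ge]
    exact ⟨ht, fun hc => hns ⟨k, hj, hi, hc⟩⟩
  exact (chain P k).lab _ _ hlt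

/-- the chain orders are initial stems of the limit order -/
theorem tfun_emb (P : CovPath) (k : ℕ) :
    IsStemEmb (tfun P k) (qOrd P) (fun i => (i : ℕ)) := by
  refine ⟨fun a b hab => Fin.ext hab, fun i j => ?_, fun i y hy => ?_⟩
  · exact (qOrd_le_iff P i.isLt j.isLt).symm
  · have hyi : y < (i : ℕ) := qOrd_lab P _ _ hy
    exact ⟨⟨y, lt_trans hyi i.isLt⟩, rfl⟩

end Main

section Final
open Function

theorem stems_qOrd (P : CovPath) : ∀ n, stems n (qOrd P) = P.node n := by
  intro n
  apply Set.eq_of_subset_of_subset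
  · intro S hS
    obtain ⟨b, hb, hst⟩ := hS
    obtain ⟨f, hf⟩ := hst.emb
    set k : ℕ := (Finset.univ.sup f) + 1 with hk
    have hfk : ∀ i, f i < sfun P k := by
      intro i
      have h1 : f i ≤ Finset.univ.sup f := Finset.le_sup (Finset.mem_univ i)
      have h2 : k ≤ sfun P k := sfun_ge P k
      omega
    set f' : Fin n → Fin (sfun P k) := fun i => ⟨f i, hfk i⟩ with hf'def
    have hinj : Injective f' := by
      intro a b hab
      exact hf.1 (congrArg Fin.val hab)
    have hembf' : IsStemEmb b (tfun P k) f' := by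
      refine ⟨hinj, fun i j => ?_, ?_⟩
      · exact (hf.2.1 i j).trans (qOrd_le_iff P (hfk i) (hfk j))
      · intro i y hy
        have hle : (tfun P k).le y (f' i) := (((tfun P k).lt_iff_le_not_ge _ _).mp hy).1
        have hnle := (((tfun P k).lt_iff_le_not_ge _ _).mp hy).2
        have hq : (qOrd P).lt (y : ℕ) (f i) := by
          rw [(qOrd P).lt_iff_le_not_ge]
          constructor
          · exact (qOrd_le_iff P y.isLt (hfk i)).mpr hle
          · intro hc
            exact hnle ((qOrd_le_iff P (hfk i) y.isLt).mp hc)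
        obtain ⟨j, hj⟩ := hf.2.2 i (y : ℕ) hq
        exact ⟨j, Fin.ext hj⟩
    have hnk : n ≤ sfun P k := by
      have := Fintype.card_le_of_injective f' hinj
      simpa using this
    exact stems_of_node_mem P hnk (chain P k).mem (hb ▸ qStemIn_mk.mpr hembf'.stemIn)
  · intro A hA
    have h1 : A ∈ stems n (tfun P (n+1)) := chain_succ_cert P n n (sfun_ge P n) A hA
    exact qstem_trans h1 (tfun_emb P (n+1)).stemIn

noncomputable def initOrd (P : CovPath) (M : ℕ) : FinOrd M :=
  pullOrd (qOrd P) (fun i : Fin M => (i : ℕ)) (fun a b hab => Fin.ext hab)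

theorem initOrd_emb (P : CovPath) (M : ℕ) :
    IsStemEmb (initOrd P M) (qOrd P) (fun i : Fin M => (i : ℕ)) := by
  refine ⟨fun a b hab => Fin.ext hab, fun i j => Iff.rfl, fun i y hy => ?_⟩
  have := qOrd_lab P _ _ hy
  exact ⟨⟨y, lt_trans this i.isLt⟩, rfl⟩

theorem initOrd_lab (P : CovPath) (M : ℕ) :
    ∀ i j : Fin M, (initOrd P M).lt i j → (i : ℕ) < (j : ℕ) := by
  intro i j hij
  exact qOrd_lab P _ _ ((pullOrd_lt i j).mp hij)

theorem nextBound_exists (P : CovPath) (M : ℕ) :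
    ∃ b, M < b ∧ ∀ A ∈ P.node M, ∃ (c : FinOrd M) (f : Fin M → ℕ),
      ⟦c⟧ = A ∧ IsStemEmb c (qOrd P) f ∧ ∀ i, f i < b := by
  classical
  have hmem : ∀ A ∈ (P.node M).toFinite.toFinset, A ∈ stems M (qOrd P) := by
    intro A hA
    rw [Set.Finite.mem_toFinset] at hA
    rw [stems_qOrd P M]
    exact hA
  obtain ⟨D, -, -, hall⟩ := finset_embs ((P.node M).toFinite.toFinset) hmem
  refine ⟨max (M+1) (D.sup id + 1),
    lt_of_lt_of_le (Nat.lt_succ_self M) (le_max_left _ _), ?_⟩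
  intro A hA
  obtain ⟨c, f, hc, hf, hmemD⟩ := hall A (by rw [Set.Finite.mem_toFinset]; exact hA)
  refine ⟨c, f, hc, hf, fun i => ?_⟩
  have h1 : f i ≤ D.sup id := Finset.le_sup (f := id) (hmemD i)
  have h2 : (D.sup id + 1) ≤ max (M+1) (D.sup id + 1) := le_max_right _ _
  omega

noncomputable def mseq (P : CovPath) : ℕ → ℕ
  | 0 => 0
  | k+1 => (nextBound_exists P (mseq P k)).choose

theorem mseq_lt (P : CovPath) (k : ℕ) : mseq P k < mseq P (k+1) :=
  (nextBound_exists P (mseq P k)).choose_spec.1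

theorem mseq_spec (P : CovPath) (k : ℕ) :
    ∀ A ∈ P.node (mseq P k), ∃ (c : FinOrd (mseq P k)) (f : Fin (mseq P k) → ℕ),
      ⟦c⟧ = A ∧ IsStemEmb c (qOrd P) f ∧ ∀ i, f i < mseq P (k+1) :=
  (nextBound_exists P (mseq P k)).choose_spec.2

end Final


/-- Given an infinite path `P = {Γ₁, Γ₂, …}` in covtree,
there is a strictly increasing sequence `m₁ < m₂ < …` of natural numbers and
labeled causets `C̃_{m₁} ⊂ C̃_{m₂} ⊂ …` with `|C̃_{m_k}| = m_k`, each
`C̃_{m_k}` a stem (initial downward-closed subcauset) in `C̃_{m_{k+1}}`, and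
each `C̃_{m_{k+1}}` a labeled certificate of `Γ_{m_k}`; the union of this
nested sequence is a labeled causet on `ℕ` which is a labeled certificate of
the whole path `P`. -/
theorem path_has_labeled_certificate (P : CovPath) :
    ∃ m : ℕ → ℕ, StrictMono m ∧
    ∃ hm : ∀ k, m k ≤ m (k + 1),
    ∃ C : (k : ℕ) → LabCauset (m k),
      (∀ k, ∀ i j : Fin (m k), (C k).val.le i j ↔
          (C (k + 1)).val.le (Fin.castLE (hm k) i) (Fin.castLE (hm k) j)) ∧
      (∀ k, StemIn (C k).val (C (k + 1)).val) ∧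
      (∀ k, stems (m k) (C (k + 1)).val = P.node (m k)) ∧
      ∃ q : PartialOrder ℕ, (∀ i j : ℕ, q.lt i j → i < j) ∧
        (∀ k, ∀ i j : Fin (m k), (C k).val.le i j ↔ q.le (i : ℕ) (j : ℕ)) ∧
        (∀ n : ℕ, stems n q = P.node n) := by
  classical
  refine ⟨mseq P, strictMono_nat_of_lt_succ (mseq_lt P), fun k => (mseq_lt P k).le,
    fun k => ⟨initOrd P (mseq P k), initOrd_lab P (mseq P k)⟩, ?_, ?_, ?_,
    qOrd P, qOrd_lab P, fun k i j => Iff.rfl, stems_qOrd P⟩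
  · exact fun k i j => Iff.rfl
  · intro k
    refine ⟨Fin.castLE (mseq_lt P k).le,
      fun a b hab => Fin.ext (congrArg (Fin.val : Fin (mseq P (k+1)) → ℕ) hab), fun i j => Iff.rfl, ?_⟩
    intro i y hy
    have h1 : (qOrd P).lt (y : ℕ) (i : ℕ) := (pullOrd_lt _ _).mp hy
    have h2 : (y : ℕ) < (i : ℕ) := qOrd_lab P _ _ h1
    exact ⟨⟨(y : ℕ), lt_trans h2 i.isLt⟩, Fin.ext rfl⟩
  · intro k
    apply Set.eq_of_subset_of_subset
    · intro S hS
      rw [← stems_qOrd P (mseq P k)]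
      exact qstem_trans hS (initOrd_emb P (mseq P (k+1))).stemIn
    · intro A hA
      obtain ⟨c, f, hc, hf, hlt⟩ := mseq_spec P k A hA
      have hstem : StemIn c (initOrd P (mseq P (k+1))) :=
        factor_emb hf (initOrd_emb P (mseq P (k+1))) (fun i => ⟨⟨f i, hlt i⟩, rfl⟩)
      exact hc ▸ qStemIn_mk.mpr hstem
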